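/- Let P be a finite abelian p-group and H an abelian subgroup of Aut(P) whose order is coprime to p. Let ψ ∈ Aut(P) be an automorphism commuting with every element of H and such that for every x ∈ P there exists h ∈ H (possibly depending on x) with ψ(x) = h(x). Then ψ ∈ H. -/

import Mathlib

variable {P : Type} [CommGroup P]

/-- The "commutator with `k`" homomorphism `x ↦ k x / x` (valid since `P` is abelian). -/
private def faut (k : MulAut P) : P →* P where
  toFun x := k x / x
  map_one' := by simp
  map_mul' x y := by show k (x * y) / (x * y) = k x / x * (k y / y); rw [map_mul, div_mul_div_comm]

private lemma faut_apply (k : MulAut P) (x : P) : faut k x = k x / x := rfl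

private lemma mem_faut_ker {k : MulAut P} {x : P} : x ∈ (faut k).ker ↔ k x = x := by
  rw [MonoidHom.mem_ker, faut_apply, div_eq_one]

/-- Restriction of an automorphism to an invariant subgroup of a finite group. -/
private noncomputable def restrictAut [Finite P] (g : MulAut P) (Q : Subgroup P)
    (h : ∀ q ∈ Q, g q ∈ Q) : MulAut Q :=
  MulEquiv.ofBijective ((g.toMonoidHom.comp Q.subtype).codRestrict Q (fun q => h q q.2))
    (Finite.injective_iff_bijective.mp (fun a b hab => by
      apply Subtype.ext
      exact g.injective (congrArg Subtype.val hab)))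

private lemma restrictAut_coe [Finite P] (g : MulAut P) (Q : Subgroup P)
    (h : ∀ q ∈ Q, g q ∈ Q) (q : Q) : (restrictAut g Q h q : P) = g q := rfl

section helpers
variable {Q : Subgroup P}

private lemma pow_apply_coe (γ : MulAut Q) (g : MulAut P)
    (hγ : ∀ q : Q, (γ q : P) = g q) : ∀ (j : ℕ) (q : Q), ((γ ^ j) q : P) = (g ^ j) q := by
  intro j
  induction j with
  | zero => intro q; simp
  | succ j ih =>
    intro q
    rw [pow_succ, pow_succ, MulAut.mul_apply, MulAut.mul_apply, ih, hγ]

private lemma orderOf_dvd_of_acts_like (γ : MulAut Q) (g : MulAut P)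
    (hγ : ∀ q : Q, (γ q : P) = g q) : orderOf γ ∣ orderOf g := by
  apply orderOf_dvd_of_pow_eq_one
  ext q
  have := pow_apply_coe γ g hγ (orderOf g) q
  rw [pow_orderOf_eq_one, MulAut.one_apply] at this
  rw [MulAut.one_apply]
  exact this

end helpers

private lemma coset_cover : ∀ (n : ℕ) (G : Type) [CommGroup G] [Finite G],
    Nat.card G < n → ∀ S : Set (MulAut G), S.Nonempty →
    (∀ g ∈ S, ∀ g' ∈ S, g * g' = g' * g) →
    (∀ g ∈ S, (orderOf g).Coprime (Nat.card G)) →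
    (∀ x : G, ∃ g ∈ S, g x = x) → (1 : MulAut G) ∈ S := by
  intro n
  induction n using Nat.strong_induction_on with
  | _ n IH =>
  intro G _ _ hGn S hne hScomm hord hcov
  obtain ⟨k, hkS, hmax⟩ :=
    Set.exists_max_image S (fun g => Nat.card (faut g).ker) (Set.toFinite S) hne
  by_cases hk1 : ∀ x : G, k x = x
  · have hk : k = 1 := by
      apply MulEquiv.ext; intro x; rw [MulAut.one_apply]; exact hk1 x
    rw [← hk]; exact hkS
  push_neg at hk1
  obtain ⟨x0, hx0⟩ := hk1
  set Q1 : Subgroup G := (faut k).ker with hQ1def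
  set Q2 : Subgroup G := (faut k).range with hQ2def
  have hQ1mem : ∀ x : G, x ∈ Q1 ↔ k x = x := fun x => mem_faut_ker
  have hQ2mem : ∀ x : G, x ∈ Q2 ↔ ∃ z, k z / z = x := fun x => MonoidHom.mem_range
  have hkord := hord k hkS
  set N := orderOf k with hN
  have hg1 : Nat.gcd N (Nat.card G) = 1 := hkord
  have hkN : k ^ N = 1 := by rw [hN]; exact pow_orderOf_eq_one k
  -- powers of k fix Q1 pointwise
  have hQ1pow : ∀ x ∈ Q1, ∀ i : ℕ, (k ^ i) x = x := by
    intro x hx i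
    induction i with
    | zero => simp
    | succ i ih => rw [pow_succ, MulAut.mul_apply, (hQ1mem x).mp hx, ih]
  -- trivial intersection
  have hint : ∀ x : G, x ∈ Q1 → x ∈ Q2 → x = 1 := by
    intro x h1 h2
    obtain ⟨z, hz⟩ := (hQ2mem x).mp h2
    have hxn : x ^ N = 1 := by
      have e1 : ∏ i ∈ Finset.range N, (k ^ i) x = x ^ N := by
        rw [Finset.prod_congr rfl (fun i _ => hQ1pow x h1 i), Finset.prod_const,
          Finset.card_range]
      have e2 : ∏ i ∈ Finset.range N, (k ^ i) x = 1 := by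
        have hterm : ∀ i ∈ Finset.range N, (k ^ i) x = (k ^ (i + 1)) z / (k ^ i) z := by
          intro i _
          rw [← hz, map_div]
          congr 1
        rw [Finset.prod_congr rfl hterm, Finset.prod_range_div (fun i => (k ^ i) z)]
        rw [hkN]
        simp
      rw [← e1]; exact e2
    have hd1 : orderOf x ∣ N := orderOf_dvd_of_pow_eq_one hxn
    have hd2 : orderOf x ∣ Nat.card G := orderOf_dvd_natCard x
    have : orderOf x = 1 := Nat.dvd_one.mp (hg1 ▸ Nat.dvd_gcd hd1 hd2)
    exact orderOf_eq_one_iff.mp this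
  -- invariance of Q1 and Q2 under S
  have hinv1 : ∀ g ∈ S, ∀ x ∈ Q1, g x ∈ Q1 := by
    intro g hg x hx
    rw [hQ1mem]
    calc k (g x) = (k * g) x := rfl
      _ = (g * k) x := by rw [← hScomm g hg k hkS]
      _ = g (k x) := rfl
      _ = g x := by rw [(hQ1mem x).mp hx]
  have hinv2 : ∀ g ∈ S, ∀ x ∈ Q2, g x ∈ Q2 := by
    intro g hg x hx
    obtain ⟨z, hz⟩ := (hQ2mem x).mp hx
    rw [hQ2mem]
    refine ⟨g z, ?_⟩
    rw [← hz, map_div]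
    congr 1
    calc k (g z) = (k * g) z := rfl
      _ = (g * k) z := by rw [← hScomm g hg k hkS]
      _ = g (k z) := rfl
  -- decomposition G = Q1 * Q2
  have hdecomp : ∀ x : G, ∃ a ∈ Q1, ∃ b ∈ Q2, x = a * b := by
    intro x
    have hsurj : Function.Surjective (fun y : G => y ^ N) := by
      apply Finite.injective_iff_surjective.mp
      intro a b hab
      simp only at hab
      have h1 : (a / b) ^ N = 1 := by rw [div_pow, hab, div_self']
      have hd1 : orderOf (a / b) ∣ N := orderOf_dvd_of_pow_eq_one h1
      have hd2 : orderOf (a / b) ∣ Nat.card G := orderOf_dvd_natCard _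
      have : orderOf (a / b) = 1 := Nat.dvd_one.mp (hg1 ▸ Nat.dvd_gcd hd1 hd2)
      exact div_eq_one.mp (orderOf_eq_one_iff.mp this)
    obtain ⟨y, hy⟩ := hsurj x
    simp only at hy
    set F : ℕ → G := fun i => (k ^ i) y with hF
    have hFsucc : ∀ i : ℕ, k (F i) = F (i + 1) := by
      intro i
      rw [hF]
      simp only
      rw [pow_succ', MulAut.mul_apply]
    set a : G := ∏ i ∈ Finset.range N, F i with ha
    have haQ1 : a ∈ Q1 := by
      rw [hQ1mem, ← div_eq_one, ha, map_prod, ← Finset.prod_div_distrib]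
      have hterm : ∀ i ∈ Finset.range N, k (F i) / F i = F (i + 1) / F i := by
        intro i _; rw [hFsucc i]
      rw [Finset.prod_congr rfl hterm, Finset.prod_range_div F]
      have hFN : F N = y := by
        rw [hF]; simp only; rw [hkN]; simp
      have hF0 : F 0 = y := by rw [hF]; simp
      rw [hFN, hF0, div_self']
    have hfac : ∀ i : ℕ, y / F i ∈ Q2 := by
      intro i
      induction i with
      | zero =>
        have : F 0 = y := by rw [hF]; simp
        rw [this, div_self']; exact one_mem _
      | succ i ih =>
        have hsplit : y / F (i + 1) = (y / F i) * (F i / F (i + 1)) :=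
          (div_mul_div_cancel y (F i) (F (i + 1))).symm
        rw [hsplit]
        have h1 : F (i + 1) / F i ∈ Q2 := by
          rw [hQ2mem]; exact ⟨F i, by rw [hFsucc i]⟩
        have h2 := inv_mem h1
        rw [inv_div] at h2
        exact mul_mem ih h2
    have hb : x * a⁻¹ = ∏ i ∈ Finset.range N, (y / F i) := by
      rw [Finset.prod_div_distrib, Finset.prod_const, Finset.card_range, ← ha, ← hy,
        div_eq_mul_inv]
    have hbQ2 : x * a⁻¹ ∈ Q2 := by
      rw [hb]; exact Subgroup.prod_mem _ (fun i _ => hfac i)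
    refine ⟨a, haQ1, x * a⁻¹, hbQ2, ?_⟩
    rw [mul_comm a (x * a⁻¹)]
    exact (inv_mul_cancel_right x a).symm
  -- uniqueness of components
  have huniq : ∀ g ∈ S, ∀ a ∈ Q1, ∀ b ∈ Q2, g (a * b) = a * b → g a = a ∧ g b = b := by
    intro g hg a haa b hbb hfix
    have h2 : g a * g b = a * b := by rw [← map_mul]; exact hfix
    have hv1 : g a / a ∈ Q1 := div_mem (hinv1 g hg a haa) haa
    have hveq : g a / a = b / g b := by
      rw [div_eq_div_iff_mul_eq_mul, h2, mul_comm]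
    have hv2 : g a / a ∈ Q2 := by rw [hveq]; exact div_mem hbb (hinv2 g hg b hbb)
    have hone := hint _ hv1 hv2
    have hgaa : g a = a := div_eq_one.mp hone
    refine ⟨hgaa, ?_⟩
    rw [hgaa] at h2
    exact mul_left_cancel h2
  -- Q1 is nontrivial
  have hQ1ne : Q1 ≠ ⊥ := by
    intro hbot
    have hall : ∀ x : G, x = 1 := by
      intro x
      obtain ⟨g, hgS, hgx⟩ := hcov x
      have hxk : x ∈ (faut g).ker := mem_faut_ker.mpr hgx
      have hbk : (faut g).ker = ⊥ := by
        by_contra hne'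
        have h1 := (Subgroup.one_lt_card_iff_ne_bot (H := (faut g).ker)).mpr hne'
        have h2 := hmax g hgS
        rw [hbot, Subgroup.card_bot] at h2
        omega
      rw [hbk] at hxk
      exact Subgroup.mem_bot.mp hxk
    exact hx0 ((hall (k x0)).trans (hall x0).symm)
  have hQ1top : Q1 ≠ ⊤ := by
    intro h
    exact hx0 ((hQ1mem x0).mp (h ▸ Subgroup.mem_top x0))
  have hQ2top : Q2 ≠ ⊤ := by
    intro h
    apply hQ1ne
    rw [Subgroup.eq_bot_iff_forall]
    intro x hx
    exact hint x hx (h ▸ Subgroup.mem_top x)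
  have hcard1 : Nat.card Q1 < Nat.card G := by
    by_contra h
    push_neg at h
    exact hQ1top (Subgroup.eq_top_of_le_card Q1 h)
  have hcard2 : Nat.card Q2 < Nat.card G := by
    by_contra h
    push_neg at h
    exact hQ2top (Subgroup.eq_top_of_le_card Q2 h)
  -- step 1
  have step1 : ∀ x1 ∈ Q1, ∃ g ∈ S, g x1 = x1 ∧ ∀ z ∈ Q2, g z = z := by
    intro x1 hx1
    set T : Set (MulAut Q2) :=
      {γ | ∃ g, g ∈ S ∧ g x1 = x1 ∧ ∀ q : Q2, (γ q : G) = g q} with hT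
    have hTcov : ∀ z : Q2, ∃ γ ∈ T, γ z = z := by
      intro z
      obtain ⟨g, hgS, hgfix⟩ := hcov (x1 * (z : G))
      obtain ⟨hga, hgb⟩ := huniq g hgS x1 hx1 z z.2 hgfix
      refine ⟨restrictAut g Q2 (hinv2 g hgS),
        ⟨g, hgS, hga, fun q => restrictAut_coe g Q2 (hinv2 g hgS) q⟩, Subtype.ext ?_⟩
      rw [restrictAut_coe]; exact hgb
    have hTne : T.Nonempty := by
      obtain ⟨γ, hγ, _⟩ := hTcov 1; exact ⟨γ, hγ⟩
    have hTcomm : ∀ γ ∈ T, ∀ γ' ∈ T, γ * γ' = γ' * γ := by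
      rintro γ ⟨g, hgS, -, hgact⟩ γ' ⟨g', hg'S, -, hg'act⟩
      apply MulEquiv.ext
      intro q
      apply Subtype.ext
      rw [MulAut.mul_apply, MulAut.mul_apply]
      calc (γ (γ' q) : G) = g (g' q) := by rw [hgact, hg'act]
        _ = (g * g') q := rfl
        _ = (g' * g) q := by rw [hScomm g hgS g' hg'S]
        _ = g' (g q) := rfl
        _ = (γ' (γ q) : G) := by rw [hg'act, hgact]
    have hTord : ∀ γ ∈ T, (orderOf γ).Coprime (Nat.card Q2) := by
      rintro γ ⟨g, hgS, -, hgact⟩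
      have h1 : orderOf γ ∣ orderOf g := orderOf_dvd_of_acts_like γ g hgact
      exact Nat.Coprime.coprime_dvd_right (Subgroup.card_subgroup_dvd_card Q2)
        (Nat.Coprime.coprime_dvd_left h1 (hord g hgS))
    have h1T := IH (Nat.card G) hGn Q2 hcard2 T hTne hTcomm hTord hTcov
    obtain ⟨g, hgS, hgx1, hgact⟩ := h1T
    refine ⟨g, hgS, hgx1, fun z hz => ?_⟩
    have := hgact ⟨z, hz⟩
    rw [MulAut.one_apply] at this
    exact this.symm
  -- step 2
  set T2 : Set (MulAut Q1) :=
    {γ | ∃ g, g ∈ S ∧ (∀ z ∈ Q2, g z = z) ∧ ∀ q : Q1, (γ q : G) = g q} with hT2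
  have hT2cov : ∀ a : Q1, ∃ γ ∈ T2, γ a = a := by
    intro a
    obtain ⟨g, hgS, hga, hgQ2⟩ := step1 (a : G) a.2
    refine ⟨restrictAut g Q1 (hinv1 g hgS),
      ⟨g, hgS, hgQ2, fun q => restrictAut_coe g Q1 (hinv1 g hgS) q⟩, Subtype.ext ?_⟩
    rw [restrictAut_coe]; exact hga
  have hT2ne : T2.Nonempty := by
    obtain ⟨γ, hγ, _⟩ := hT2cov 1; exact ⟨γ, hγ⟩
  have hT2comm : ∀ γ ∈ T2, ∀ γ' ∈ T2, γ * γ' = γ' * γ := by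
    rintro γ ⟨g, hgS, -, hgact⟩ γ' ⟨g', hg'S, -, hg'act⟩
    apply MulEquiv.ext
    intro q
    apply Subtype.ext
    rw [MulAut.mul_apply, MulAut.mul_apply]
    calc (γ (γ' q) : G) = g (g' q) := by rw [hgact, hg'act]
      _ = (g * g') q := rfl
      _ = (g' * g) q := by rw [hScomm g hgS g' hg'S]
      _ = g' (g q) := rfl
      _ = (γ' (γ q) : G) := by rw [hg'act, hgact]
  have hT2ord : ∀ γ ∈ T2, (orderOf γ).Coprime (Nat.card Q1) := by
    rintro γ ⟨g, hgS, -, hgact⟩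
    have h1 : orderOf γ ∣ orderOf g := orderOf_dvd_of_acts_like γ g hgact
    exact Nat.Coprime.coprime_dvd_right (Subgroup.card_subgroup_dvd_card Q1)
      (Nat.Coprime.coprime_dvd_left h1 (hord g hgS))
  have h2T := IH (Nat.card G) hGn Q1 hcard1 T2 hT2ne hT2comm hT2ord hT2cov
  obtain ⟨g, hgS, hgQ2, hgact⟩ := h2T
  have hgone : ∀ x : G, g x = x := by
    intro x
    obtain ⟨a, haa, b, hbb, rfl⟩ := hdecomp x
    rw [map_mul, hgQ2 b hbb]
    have := hgact ⟨a, haa⟩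
    rw [MulAut.one_apply] at this
    rw [← this]
  have : g = 1 := by
    apply MulEquiv.ext; intro x; rw [hgone x, MulAut.one_apply]
  rw [← this]; exact hgS

/-- Let `P` be a finite abelian `p`-group and `H` an abelian subgroup of `Aut(P)` whose
order is coprime to `p`.  Let `ψ ∈ Aut(P)` be an automorphism commuting with every element
of `H` and such that for every `x ∈ P` there exists `h ∈ H` (possibly depending on `x`)
with `ψ(x) = h(x)`.  Then `ψ ∈ H`. -/
theorem stmt9 (p : ℕ) (hp : p.Prime) (P : Type) [CommGroup P] [Finite P]
    (hP : IsPGroup p P) (H : Subgroup (MulAut P))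
    (hab : ∀ a ∈ H, ∀ b ∈ H, a * b = b * a)
    (hcop : Nat.Coprime (Nat.card H) p)
    (ψ : MulAut P) (hcomm : ∀ h ∈ H, ψ * h = h * ψ)
    (hloc : ∀ x : P, ∃ h ∈ H, ψ x = h x) :
    ψ ∈ H := by
  haveI := Fact.mk hp
  obtain ⟨e, he⟩ := IsPGroup.iff_card.mp hP
  set m := Nat.card H with hm
  have hHpow : ∀ h ∈ H, h ^ m = 1 := by
    intro h hh
    exact orderOf_dvd_iff_pow_eq_one.mp (Subgroup.orderOf_dvd_natCard H hh)
  have hψcomm : ∀ h ∈ H, Commute ψ h := fun h hh => hcomm h hh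
  have hψm : ψ ^ m = 1 := by
    apply MulEquiv.ext
    intro x
    obtain ⟨h, hh, hx⟩ := hloc x
    have key : ∀ j : ℕ, (ψ ^ j) x = (h ^ j) x := by
      intro j
      induction j with
      | zero => simp
      | succ j ih =>
        have c1 : ψ * h ^ j = h ^ j * ψ := ((hψcomm h hh).pow_right j).eq
        calc (ψ ^ (j + 1)) x = (ψ * ψ ^ j) x := by rw [← pow_succ']
          _ = ψ ((ψ ^ j) x) := rfl
          _ = ψ ((h ^ j) x) := by rw [ih]
          _ = (ψ * h ^ j) x := rfl
          _ = (h ^ j * ψ) x := by rw [c1]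
          _ = (h ^ j) (ψ x) := rfl
          _ = (h ^ j) (h x) := by rw [hx]
          _ = (h ^ j * h) x := rfl
          _ = (h ^ (j + 1)) x := by rw [← pow_succ]
    rw [key m, hHpow h hh]
  set S : Set (MulAut P) := {g | ∃ h ∈ H, g = ψ * h⁻¹} with hS
  have hcovS : ∀ x : P, ∃ g ∈ S, g x = x := by
    intro x
    obtain ⟨h, hh, hx⟩ := hloc x
    refine ⟨ψ * h⁻¹, ⟨h, hh, rfl⟩, ?_⟩
    have c : ψ * h⁻¹ = h⁻¹ * ψ := ((hψcomm h hh).inv_right).eq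
    rw [c, MulAut.mul_apply, hx]
    simp
  have hne : S.Nonempty := ⟨ψ * 1⁻¹, 1, H.one_mem, rfl⟩
  have hcommS : ∀ g ∈ S, ∀ g' ∈ S, g * g' = g' * g := by
    rintro g ⟨h, hh, rfl⟩ g' ⟨h', hh', rfl⟩
    have c1 : Commute ψ (h'⁻¹) := (hψcomm h' hh').inv_right
    have c2 : Commute (h⁻¹) ψ := ((hψcomm h hh).inv_right).symm
    have c3 : Commute (h⁻¹) (h'⁻¹) := (Commute.inv_inv (hab h hh h' hh'))
    exact Commute.mul_left (Commute.mul_right (Commute.refl ψ) c1)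
      (Commute.mul_right c2 c3)
  have hordS : ∀ g ∈ S, (orderOf g).Coprime (Nat.card P) := by
    rintro g ⟨h, hh, rfl⟩
    have hcm : Commute ψ (h⁻¹) := (hψcomm h hh).inv_right
    have hpow : (ψ * h⁻¹) ^ m = 1 := by
      rw [hcm.mul_pow, hψm, inv_pow, hHpow h hh]
      simp
    have hdvd : orderOf (ψ * h⁻¹) ∣ m := orderOf_dvd_of_pow_eq_one hpow
    have h1 : (orderOf (ψ * h⁻¹)).Coprime p := Nat.Coprime.coprime_dvd_left hdvd hcop
    rw [he]
    exact h1.pow_right e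
  have h1S := coset_cover (Nat.card P + 1) P (Nat.lt_succ_self _) S hne hcommS hordS hcovS
  obtain ⟨h, hh, h1⟩ := h1S
  have hψh : ψ = h := by
    have h2 := h1.symm
    rwa [mul_inv_eq_one] at h2
  rw [hψh]; exact hh
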